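/- Let G be a finite connected simple graph on n ≥ 1 vertices. Then there are at least 2^(n−1) orderings (v_1, …, v_n) of all the vertices of G such that for every i with 1 ≤ i ≤ n, the subgraph of G induced by {v_i, v_{i+1}, …, v_n} is connected. -/

import Mathlib

open SimpleGraph


/-- `σ` is an elimination ordering of non-cut vertices of `G`: for every `i`,
the subgraph induced by the not-yet-removed vertices `{σ j | j ≥ i}` is
connected. -/
def IsConnectedEliminationOrdering {V : Type*} {n : ℕ} (G : SimpleGraph V)
    (σ : Fin n ≃ V) : Prop :=
  ∀ i : Fin n, (G.induce {x : V | ∃ j : Fin n, i ≤ j ∧ σ j = x}).Connected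


noncomputable def induceInduceIso {V : Type*} (G : SimpleGraph V) (s : Set V) (t : Set ↥s) :
    (G.induce s).induce t ≃g G.induce (Subtype.val '' t) where
  toEquiv := Equiv.Set.image Subtype.val t Subtype.val_injective
  map_rel_iff' := Iff.rfl

lemma exists_noncut {V : Type*} [Fintype V] [DecidableEq V] (G : SimpleGraph V)
    (hG : G.Connected) (h2 : 2 ≤ Fintype.card V) (u : V) :
    ∃ v, v ≠ u ∧ (G.induce {x | x ≠ v}).Connected := by
  obtain ⟨v, -, hv⟩ := Finset.exists_max_image Finset.univ (G.dist u) ⟨u, Finset.mem_univ u⟩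
  have hv : ∀ w, G.dist u w ≤ G.dist u v := fun w => hv w (Finset.mem_univ w)
  obtain ⟨x, hx⟩ := Fintype.exists_ne_of_one_lt_card h2 u
  have hxu : 1 ≤ G.dist u x := by
    rcases Nat.eq_zero_or_pos (G.dist u x) with h | h
    · exact absurd ((hG.preconnected u x).dist_eq_zero_iff.mp h).symm hx
    · exact h
  have hvu : v ≠ u := by
    rintro rfl
    have h0 : G.dist v x = 0 := Nat.le_zero.mp (by simpa [SimpleGraph.dist_self] using hv x)
    omega
  refine ⟨v, hvu, ?_⟩
  apply SimpleGraph.induce_connected_of_patches u (show u ≠ v from hvu.symm)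
  intro w hw
  obtain ⟨p, hp⟩ := hG.exists_walk_length_eq_dist u w
  have hvp : v ∉ p.support := by
    intro hvs
    have h1 : G.dist u v ≤ (p.takeUntil v hvs).length := SimpleGraph.dist_le _
    have h2 : G.dist v w ≤ (p.dropUntil v hvs).length := SimpleGraph.dist_le _
    have h3 : (p.takeUntil v hvs).length + (p.dropUntil v hvs).length = p.length := by
      rw [← SimpleGraph.Walk.length_append, p.take_spec hvs]
    have h4 : G.dist u w ≤ G.dist u v := hv w
    have h5 : G.dist v w = 0 := by omega
    exact hw ((hG.preconnected v w).dist_eq_zero_iff.mp h5).symm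
  refine ⟨{x | x ∈ p.support}, fun y hy h => hvp (h ▸ hy), p.start_mem_support,
    p.end_mem_support, ?_⟩
  exact (p.connected_induce_support).preconnected _ _

noncomputable def extOrd {V : Type*} [DecidableEq V] (v : V) {m : ℕ}
    (σ' : Fin m ≃ ↥{x : V | x ≠ v}) : Fin (m + 1) ≃ V :=
  (finSuccEquiv m).trans (σ'.optionCongr.trans (Equiv.optionSubtypeNe v))

@[simp] lemma extOrd_zero {V : Type*} [DecidableEq V] (v : V) {m : ℕ}
    (σ' : Fin m ≃ ↥{x : V | x ≠ v}) : extOrd v σ' 0 = v := by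
  simp [extOrd]
  rfl

@[simp] lemma extOrd_succ {V : Type*} [DecidableEq V] (v : V) {m : ℕ}
    (σ' : Fin m ≃ ↥{x : V | x ≠ v}) (i : Fin m) : extOrd v σ' i.succ = (σ' i).val := by
  simp [extOrd]
  rfl

lemma ICEO_ext {V : Type*} [DecidableEq V] {v : V} {m : ℕ} {G : SimpleGraph V}
    (hG : G.Connected) {σ' : Fin m ≃ ↥{x : V | x ≠ v}}
    (h : IsConnectedEliminationOrdering (G.induce {x : V | x ≠ v}) σ') :
    IsConnectedEliminationOrdering G (extOrd v σ') := by
  intro i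
  induction i using Fin.cases with
  | zero =>
      have hs : {x : V | ∃ j : Fin (m + 1), 0 ≤ j ∧ extOrd v σ' j = x} = Set.univ := by
        ext x
        simp only [Set.mem_setOf_eq, Set.mem_univ, iff_true]
        exact ⟨(extOrd v σ').symm x, Fin.zero_le _, Equiv.apply_symm_apply _ _⟩
      rw [hs]
      exact (induceUnivIso G).connected_iff.mpr hG
  | succ k =>
      have hs : {x : V | ∃ j : Fin (m + 1), k.succ ≤ j ∧ extOrd v σ' j = x}
          = Subtype.val '' {y : ↥{x : V | x ≠ v} | ∃ j : Fin m, k ≤ j ∧ σ' j = y} := by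
        ext x
        constructor
        · rintro ⟨j, hj, rfl⟩
          induction j using Fin.cases with
          | zero => exact absurd (le_antisymm hj (Fin.zero_le _)) (Fin.succ_ne_zero k)
          | succ j' =>
              exact ⟨σ' j', ⟨j', Fin.succ_le_succ_iff.mp hj, rfl⟩, (extOrd_succ v σ' j').symm⟩
        · rintro ⟨y, ⟨j, hj, rfl⟩, rfl⟩
          exact ⟨j.succ, Fin.succ_le_succ_iff.mpr hj, extOrd_succ v σ' j⟩
      rw [hs]
      exact (induceInduceIso G _ _).connected_iff.mp (h k)

lemma main_aux : ∀ (n : ℕ) (V : Type*) [Fintype V] [DecidableEq V] (G : SimpleGraph V),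
    G.Connected → Fintype.card V = n + 1 →
    2 ^ n ≤ Nat.card {σ : Fin (n + 1) ≃ V // IsConnectedEliminationOrdering G σ} := by
  intro n
  induction n with
  | zero =>
      intro V _ _ G hG hcard
      obtain ⟨e⟩ := (Fintype.card_eq (α := V) (β := Fin 1)).mp (by simp [hcard])
      let σ := e.symm
      have hσ : IsConnectedEliminationOrdering G σ := by
        intro i
        have hs : {x : V | ∃ j : Fin 1, i ≤ j ∧ σ j = x} = Set.univ := by
          ext x
          simp only [Set.mem_setOf_eq, Set.mem_univ, iff_true]
          exact ⟨σ.symm x, le_of_eq (Subsingleton.elim _ _), Equiv.apply_symm_apply _ _⟩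
        rw [hs]
        exact (induceUnivIso G).connected_iff.mpr hG
      have : Nonempty {σ : Fin 1 ≃ V // IsConnectedEliminationOrdering G σ} := ⟨⟨σ, hσ⟩⟩
      simpa using Nat.card_pos
  | succ k ih =>
      intro V _ _ G hG hcard
      have h2 : 2 ≤ Fintype.card V := by omega
      obtain ⟨u⟩ : Nonempty V := Fintype.card_pos_iff.mp (by omega)
      obtain ⟨v, -, hv⟩ := exists_noncut G hG h2 u
      obtain ⟨w, hwv, hw⟩ := exists_noncut G hG h2 v
      have hcv : Fintype.card ↥{x : V | x ≠ v} = k + 1 := by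
        rw [Set.card_ne_eq, hcard]; omega
      have hcw : Fintype.card ↥{x : V | x ≠ w} = k + 1 := by
        rw [Set.card_ne_eq, hcard]; omega
      have Hv := ih ↥{x : V | x ≠ v} (G.induce _) hv hcv
      have Hw := ih ↥{x : V | x ≠ w} (G.induce _) hw hcw
      set A := {σ' : Fin (k + 1) ≃ ↥{x : V | x ≠ v} //
        IsConnectedEliminationOrdering (G.induce {x : V | x ≠ v}) σ'}
      set B := {σ' : Fin (k + 1) ≃ ↥{x : V | x ≠ w} //
        IsConnectedEliminationOrdering (G.induce {x : V | x ≠ w}) σ'}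
      let F : A ⊕ B → {σ : Fin (k + 2) ≃ V // IsConnectedEliminationOrdering G σ} :=
        fun x => match x with
          | Sum.inl ⟨σ', h⟩ => ⟨extOrd v σ', ICEO_ext hG h⟩
          | Sum.inr ⟨σ', h⟩ => ⟨extOrd w σ', ICEO_ext hG h⟩
      have hFinj : Function.Injective F := by
        rintro (⟨σ', hσ'⟩ | ⟨σ', hσ'⟩) (⟨τ', hτ'⟩ | ⟨τ', hτ'⟩) hFeq <;>
          simp only [F, Subtype.mk.injEq] at hFeq
        · have : σ' = τ' := by
            apply Equiv.ext
            intro i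
            apply Subtype.val_injective
            rw [← extOrd_succ v σ' i, ← extOrd_succ v τ' i, hFeq]
          simp [this]
        · exact absurd (by rw [← extOrd_zero v σ', hFeq, extOrd_zero]) hwv.symm
        · exact absurd (by rw [← extOrd_zero w σ', hFeq, extOrd_zero]) hwv
        · have : σ' = τ' := by
            apply Equiv.ext
            intro i
            apply Subtype.val_injective
            rw [← extOrd_succ w σ' i, ← extOrd_succ w τ' i, hFeq]
          simp [this]
      calc 2 ^ (k + 1) = 2 ^ k + 2 ^ k := by ring
        _ ≤ Nat.card A + Nat.card B := Nat.add_le_add Hv Hw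
        _ = Nat.card (A ⊕ B) := Nat.card_sum.symm
        _ ≤ _ := Nat.card_le_card_of_injective F hFinj

/-- Every finite connected simple graph on `n ≥ 1` vertices admits at least
`2^(n−1)` orderings of its vertices such that each suffix induces a connected
subgraph. -/
theorem connected_many_elimination_orderings {V : Type*} [Fintype V] {n : ℕ}
    (G : SimpleGraph V) (hG : G.Connected)
    (hn : Fintype.card V = n) (hn1 : 1 ≤ n) :
    2 ^ (n - 1) ≤
      Nat.card {σ : Fin n ≃ V // IsConnectedEliminationOrdering G σ} := by
  classical
  obtain ⟨m, rfl⟩ : ∃ m, n = m + 1 := ⟨n - 1, by omega⟩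
  simpa using main_aux m V G hG hn
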